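/- Let n, c, d be positive integers and λ > 0. Let x₁, …, x_n ∈ ℝ^d, y₁, …, y_n ∈ ℝ^c, and let K : ℝ^d × ℝ^d → ℝ be such that x ↦ K(x, z) is differentiable for every z ∈ ℝ^d. Let G ∈ ℝ^{n×n} be the Gram matrix G_{ij} = K(x_i, x_j), assume G is symmetric positive semidefinite, let Y ∈ ℝ^{n×c} have rows y_i, and set α := (G + nλ·I)^{−1} Y with rows α_i ∈ ℝ^c. Define the kernel predictor f̂(x) = Σ_{j=1}^n K(x, x_j) α_j and the loss ℓ(ŷ, y) = (1/2)‖ŷ − y‖². Then −(1/(nλ))·Σ_{i=1}^n (∇_x [ℓ(f̂(x), y_i)]|_{x = x_i}) x_i^⊤ = Σ_{i,j=1}^n (∇_x [K(x, x_j)]|_{x = x_i}) α_j^⊤ α_i · x_i^⊤, as an identity of d×d matrices, where ∇_x denotes the gradient with respect to x, α_j^⊤ α_i ∈ ℝ is the Euclidean inner product of α_j and α_i, and u x^⊤ denotes the outer product of u ∈ ℝ^d with x ∈ ℝ^d. -/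

import Mathlib

open Matrix

/-- The gradient of a function `f : ℝ^k → ℝ`, as a plain vector `Fin k → ℝ`. -/
noncomputable def grad {k : ℕ} (f : EuclideanSpace ℝ (Fin k) → ℝ) (x : Fin k → ℝ) :
    Fin k → ℝ :=
  WithLp.equiv 2 (Fin k → ℝ) <| gradient f ((WithLp.equiv 2 (Fin k → ℝ)).symm x)

lemma grad_apply' {k : ℕ} (f : EuclideanSpace ℝ (Fin k) → ℝ) (x : Fin k → ℝ) (p : Fin k) :
    grad f x p
      = fderiv ℝ f ((WithLp.equiv 2 (Fin k → ℝ)).symm x) (EuclideanSpace.single p 1) := by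
  have h := EuclideanSpace.inner_single_right (𝕜 := ℝ) p 1
    (gradient f ((WithLp.equiv 2 (Fin k → ℝ)).symm x))
  simp only [one_mul, conj_trivial] at h
  rw [show grad f x p
      = (gradient f ((WithLp.equiv 2 (Fin k → ℝ)).symm x)) p from rfl, ← h]
  exact InnerProductSpace.toDual_symm_apply

theorem kernel_fact_identity
    (n c d : ℕ) (hn : 0 < n) (hc : 0 < c) (hd : 0 < d) (lam : ℝ) (hlam : 0 < lam)
    (xs : Fin n → Fin d → ℝ)
    (K : EuclideanSpace ℝ (Fin d) → EuclideanSpace ℝ (Fin d) → ℝ)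
    (hK : ∀ z, Differentiable ℝ fun x => K x z)
    (G : Matrix (Fin n) (Fin n) ℝ)
    (hG : G = Matrix.of fun i j =>
      K ((WithLp.equiv 2 (Fin d → ℝ)).symm (xs i)) ((WithLp.equiv 2 (Fin d → ℝ)).symm (xs j)))
    (hGpsd : G.PosSemidef)
    (Y : Matrix (Fin n) (Fin c) ℝ)
    (α : Matrix (Fin n) (Fin c) ℝ)
    (hα : α = (G + ((n : ℝ) * lam) • (1 : Matrix (Fin n) (Fin n) ℝ))⁻¹ * Y)
    (fhat : EuclideanSpace ℝ (Fin d) → Fin c → ℝ)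
    (hfhat : ∀ x kk, fhat x kk
      = ∑ j, K x ((WithLp.equiv 2 (Fin d → ℝ)).symm (xs j)) * α j kk) :
    (-(1 / ((n : ℝ) * lam))) •
        ∑ i, Matrix.vecMulVec
          (grad (fun x => (1 / 2 : ℝ) * ∑ kk, (fhat x kk - Y i kk) ^ 2) (xs i)) (xs i)
      = ∑ i, ∑ j, (∑ kk, α j kk * α i kk) •
          Matrix.vecMulVec
            (grad (fun x => K x ((WithLp.equiv 2 (Fin d → ℝ)).symm (xs j))) (xs i))
            (xs i) := by
  classical
  set z : Fin n → EuclideanSpace ℝ (Fin d) :=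
    fun i => (WithLp.equiv 2 (Fin d → ℝ)).symm (xs i) with hz
  have hnl : ((n : ℝ) * lam) ≠ 0 := by positivity
  -- invertibility of G + nλ I and the normal equation
  have hMpd : (G + ((n : ℝ) * lam) • (1 : Matrix (Fin n) (Fin n) ℝ)).PosDef := by
    refine Matrix.PosDef.posSemidef_add hGpsd ?_
    rw [Matrix.smul_one_eq_diagonal]
    exact Matrix.posDef_diagonal_iff.mpr fun _ => by positivity
  have hMY : (G + ((n : ℝ) * lam) • (1 : Matrix (Fin n) (Fin n) ℝ)) * α = Y := by
    rw [hα, ← Matrix.mul_assoc,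
      Matrix.mul_nonsing_inv _ (Matrix.isUnit_iff_isUnit_det _ |>.mp hMpd.isUnit),
      Matrix.one_mul]
  -- key residual identity
  have hkey : ∀ i kk, (∑ j, K (z i) (z j) * α j kk) - Y i kk = -(((n : ℝ) * lam) * α i kk) := by
    intro i kk
    have h := congrFun (congrFun hMY i) kk
    simp only [Matrix.mul_apply, Matrix.add_apply, Matrix.smul_apply, Matrix.one_apply,
      smul_eq_mul, add_mul, Finset.sum_add_distrib, mul_ite, mul_one, mul_zero,
      ite_mul, zero_mul, Finset.sum_ite_eq, Finset.mem_univ, if_true] at h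
    have hGij : ∀ j, G i j = K (z i) (z j) := fun j => by rw [hG]; rfl
    simp only [hGij] at h
    linarith [h]
  -- the fderiv of each kernel slice
  set F : Fin n → Fin n → (EuclideanSpace ℝ (Fin d)) →L[ℝ] ℝ :=
    fun i j => fderiv ℝ (fun x => K x (z j)) (z i) with hF
  -- gradient of the loss
  have hgradL : ∀ i p,
      grad (fun x => (1 / 2 : ℝ) * ∑ kk, (fhat x kk - Y i kk) ^ 2) (xs i) p
        = (1 / 2 : ℝ) * ∑ kk, (2 * (-(((n : ℝ) * lam) * α i kk)))
            * ∑ j, α j kk * (F i j) (EuclideanSpace.single p 1) := by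
    intro i p
    rw [grad_apply']
    have hfun : (fun x => (1 / 2 : ℝ) * ∑ kk, (fhat x kk - Y i kk) ^ 2)
        = fun x => (1 / 2 : ℝ) * ∑ kk, ((∑ j, K x (z j) * α j kk) - Y i kk)
            * ((∑ j, K x (z j) * α j kk) - Y i kk) := by
      funext x
      simp only [hfhat, pow_two, hz]
    rw [hfun]
    have hS : ∀ kk, HasFDerivAt (fun x => (∑ j, K x (z j) * α j kk) - Y i kk)
        (∑ j, α j kk • F i j) (z i) := by
      intro kk
      refine HasFDerivAt.sub_const _ ?_
      refine HasFDerivAt.fun_sum fun j _ => ?_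
      have := ((hK (z j)) (z i)).hasFDerivAt.mul_const (α j kk)
      simpa [hF] using this
    have hL : HasFDerivAt
        (fun x => (1 / 2 : ℝ) * ∑ kk, ((∑ j, K x (z j) * α j kk) - Y i kk)
            * ((∑ j, K x (z j) * α j kk) - Y i kk))
        ((1 / 2 : ℝ) • ∑ kk, ((((∑ j, K (z i) (z j) * α j kk) - Y i kk)
              • (∑ j, α j kk • F i j))
            + (((∑ j, K (z i) (z j) * α j kk) - Y i kk) • (∑ j, α j kk • F i j))))
        (z i) := by
      refine HasFDerivAt.const_mul ?_ _
      exact HasFDerivAt.fun_sum fun kk _ => (hS kk).mul (hS kk)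
    rw [hL.fderiv]
    simp only [ContinuousLinearMap.smul_apply, ContinuousLinearMap.sum_apply,
      ContinuousLinearMap.add_apply, smul_eq_mul, hkey i]
    conv_lhs => rw [Finset.mul_sum]
    conv_rhs => rw [Finset.mul_sum]
    exact Finset.sum_congr rfl fun kk _ => by ring
  -- wrap up
  ext p q
  simp only [Matrix.smul_apply, Matrix.sum_apply, Matrix.vecMulVec_apply, hgradL,
    grad_apply', smul_eq_mul]
  simp only [Finset.mul_sum, Finset.sum_mul]
  refine Finset.sum_congr rfl fun i _ => ?_
  rw [Finset.sum_comm]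
  refine Finset.sum_congr rfl fun j _ => Finset.sum_congr rfl fun kk _ => ?_
  field_simp
  ring
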